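/- arXiv:1903.01636 — 2 statements merged into one kernel-verified Lean document; each statement's English description precedes it below -/
import Mathlib

section
/- A lattice polytope P is Fano if and only if its combinatorial mutation mut_w(P,F) is Fano. -/
open Set Pointwise

noncomputable section

/-- the real vector space `N_ℝ = N ⊗ ℝ` for the lattice `N ≅ ℤᵈ` -/
abbrev RVec (d : ℕ) := Fin d → ℝ

/-- the inclusion of the lattice `N = ℤᵈ` into `N_ℝ` -/
def toR {d : ℕ} (u : Fin d → ℤ) : RVec d := fun i => (u i : ℝ)

/-- the pairing `⟨w, u⟩` of `w ∈ M = Hom(N, ℤ)` with `u ∈ N_ℝ` -/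
def pairR {d : ℕ} (w : Fin d → ℤ) (u : RVec d) : ℝ := ∑ i, (w i : ℝ) * u i

/-- `P` is a lattice polytope: the convex hull of finitely many lattice points. -/
def IsLatticePolytope {d : ℕ} (P : Set (RVec d)) : Prop :=
  ∃ S : Finset (Fin d → ℤ), S.Nonempty ∧ P = convexHull ℝ (toR '' ↑S)

/-- `w ∈ M ≅ ℤᵈ` is a primitive lattice vector -/
def IsPrimitive {d : ℕ} (w : Fin d → ℤ) : Prop := Finset.univ.gcd w = 1

/-- `w_h(P)`: the convex hull of the lattice points of `P` at height `h` with
respect to `w` -/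
def heightSlice {d : ℕ} (w : Fin d → ℤ) (h : ℤ) (P : Set (RVec d)) : Set (RVec d) :=
  convexHull ℝ (toR '' {u : Fin d → ℤ | toR u ∈ P ∧ pairR w (toR u) = (h : ℝ)})

/-- `F` is a lattice polytope lying at height `0` with respect to `w`
(a candidate factor of a polytope with respect to `w`). -/
def IsFactorShape {d : ℕ} (w : Fin d → ℤ) (F : Set (RVec d)) : Prop :=
  IsLatticePolytope F ∧ ∀ x ∈ F, pairR w x = 0

/-- The family `G` witnesses that `F` is a factor of `P` with respect to `w`:
for every negative height `h`, `G h` is a possibly empty lattice polytope satisfying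
the sandwich condition `{u ∈ 𝒱(P) : ⟨w,u⟩ = h} ⊆ G h + (−h)·F ⊆ w_h(P)`,
where `𝒱(P)` is the set of vertices (extreme points) of `P`, `+` is the Minkowski
sum (with `Q + ∅ = ∅`), and `(−h)·F` is the `(−h)`-fold Minkowski sum of `F`. -/
def IsMutationWitness {d : ℕ} (w : Fin d → ℤ) (F : Set (RVec d))
    (G : ℤ → Set (RVec d)) (P : Set (RVec d)) : Prop :=
  ∀ h : ℤ, h < 0 →
    (G h = ∅ ∨ IsLatticePolytope (G h)) ∧
    {x | x ∈ Set.extremePoints ℝ P ∧ pairR w x = (h : ℝ)} ⊆ G h + (-h : ℝ) • F ∧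
    G h + (-h : ℝ) • F ⊆ heightSlice w h P

/-- the combinatorial mutation `mut_w(P, F)` of `P` given by the vector `w`, the
factor `F` and the polytopes `{G_h}`:
`mut_w(P,F) = conv( ⋃_{h<0} G_h ∪ ⋃_{h≥0} (w_h(P) + h·F) )` -/
def mutation {d : ℕ} (w : Fin d → ℤ) (F : Set (RVec d)) (G : ℤ → Set (RVec d))
    (P : Set (RVec d)) : Set (RVec d) :=
  convexHull ℝ ((⋃ (h : ℤ) (_ : h < 0), G h) ∪
    ⋃ h : ℕ, (heightSlice w (h : ℤ) P + (h : ℝ) • F))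

/-- `P` is a Fano polytope: the origin lies in the strict interior of `P` and every
vertex of `P` is a primitive lattice point. -/
def IsFano {d : ℕ} (P : Set (RVec d)) : Prop :=
  (0 : RVec d) ∈ interior P ∧
    ∀ x ∈ Set.extremePoints ℝ P, ∃ u : Fin d → ℤ, toR u = x ∧ IsPrimitive u

namespace MutAux

variable {d : ℕ}

abbrev Lam (d : ℕ) := (RVec d) →L[ℝ] ℝ

/-- integer pairing -/
def intDot (w u : Fin d → ℤ) : ℤ := ∑ i, w i * u i

lemma pairR_toR (w u : Fin d → ℤ) : pairR w (toR u) = (intDot w u : ℝ) := by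
  unfold pairR toR intDot
  push_cast
  rfl

lemma toR_injective : Function.Injective (toR (d := d)) := by
  intro a b h
  funext i
  have := congrFun h i
  simpa [toR] using this

lemma toR_add (a b : Fin d → ℤ) : toR (a + b) = toR a + toR b := by
  funext i; simp [toR]

lemma toR_zsmul (h : ℤ) (a : Fin d → ℤ) : toR (h • a) = (h : ℝ) • toR a := by
  funext i; simp [toR]

/-- primitivity shift lemma -/
lemma isPrimitive_shift {w u g : Fin d → ℤ} {h : ℤ} (hu : IsPrimitive u)
    (hh : intDot w u = h) (hg : intDot w g = 0) : IsPrimitive (u + h • g) := by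
  have hdvd : ∀ i, Finset.univ.gcd (u + h • g) ∣ (u + h • g) i := by
    intro i; exact Finset.gcd_dvd (Finset.mem_univ i)
  set e := Finset.univ.gcd (u + h • g) with he
  have hdh : e ∣ h := by
    have : e ∣ ∑ i, w i * (u + h • g) i := by
      refine Finset.dvd_sum ?_
      intro i _
      exact Dvd.dvd.mul_left (hdvd i) (w i)
    have hsum : ∑ i, w i * (u + h • g) i = h := by
      have e1 : ∀ i, w i * (u + h • g) i = w i * u i + h * (w i * g i) := by
        intro i; simp only [Pi.add_apply, Pi.smul_apply, smul_eq_mul]; ring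
      rw [Finset.sum_congr rfl (fun i _ => e1 i), Finset.sum_add_distrib, ← Finset.mul_sum]
      rw [intDot] at hh hg
      rw [hh, hg, mul_zero, add_zero]
    rwa [hsum] at this
  have hdu : ∀ i, e ∣ u i := by
    intro i
    have heq : u i = (u + h • g) i - h * g i := by
      simp only [Pi.add_apply, Pi.smul_apply, smul_eq_mul]; ring
    rw [heq]
    exact dvd_sub (hdvd i) (hdh.mul_right (g i))
  have : e ∣ Finset.univ.gcd u := Finset.dvd_gcd (fun i _ => hdu i)
  rw [hu] at this
  have hnorm : normalize e = e := Finset.normalize_gcd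
  have : IsUnit e := isUnit_of_dvd_one this
  have : normalize e = 1 := normalize_eq_one.mpr this
  rw [hnorm] at this
  exact this


/-- the pairing with an integer vector as a continuous linear functional -/
def wlin (w : Fin d → ℤ) : Lam d :=
  LinearMap.toContinuousLinearMap
    { toFun := fun x => pairR w x
      map_add' := by
        intro a b
        show ∑ i, (w i : ℝ) * (a + b) i = (∑ i, (w i : ℝ) * a i) + ∑ i, (w i : ℝ) * b i
        rw [← Finset.sum_add_distrib]
        apply Finset.sum_congr rfl
        intro i _
        simp only [Pi.add_apply]; ring
      map_smul' := by
        intro c a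
        show ∑ i, (w i : ℝ) * (c • a) i = c * ∑ i, (w i : ℝ) * a i
        rw [Finset.mul_sum]
        apply Finset.sum_congr rfl
        intro i _
        simp only [Pi.smul_apply, smul_eq_mul]; ring }

lemma wlin_apply (w : Fin d → ℤ) (x : RVec d) : wlin w x = pairR w x := rfl

/-- bound on a convex hull from a bound on the generators -/
lemma le_on_convexHull {A : Set (RVec d)} {f : Lam d} {c : ℝ}
    (hA : ∀ a ∈ A, f a ≤ c) : ∀ x ∈ convexHull ℝ A, f x ≤ c := by
  intro x hx
  have : convexHull ℝ A ⊆ {y | f y ≤ c} := by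
    apply convexHull_min hA
    exact convex_halfSpace_le ⟨fun a b => map_add f a b, fun r a => map_smul f r a⟩ c
  exact this hx

lemma eq_on_convexHull {A : Set (RVec d)} {f : Lam d} {c : ℝ}
    (hA : ∀ a ∈ A, f a = c) : ∀ x ∈ convexHull ℝ A, f x = c := by
  intro x hx
  have : convexHull ℝ A ⊆ {y | f y = c} := by
    apply convexHull_min hA
    exact convex_hyperplane ⟨fun a b => map_add f a b, fun r a => map_smul f r a⟩ c
  exact this hx

/-- face lemma: a point of a polytope maximizing a linear functional lies in the
convex hull of the maximizing generators -/
lemma mem_convexHull_filter_eq [DecidableEq (RVec d)] {T : Finset (RVec d)} {f : Lam d} {c : ℝ}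
    (hub : ∀ a ∈ T, f a ≤ c) {x : RVec d}
    (hx : x ∈ convexHull ℝ (T : Set (RVec d))) (hfx : f x = c) :
    x ∈ convexHull ℝ ((T.filter (fun a => f a = c) : Finset (RVec d)) : Set (RVec d)) := by
  classical
  rw [Finset.mem_convexHull'] at hx
  obtain ⟨wt, hw0, hw1, hsum⟩ := hx
  have hfsum : ∑ y ∈ T, wt y * f y = c := by
    have : f x = ∑ y ∈ T, wt y * f y := by
      rw [← hsum, map_sum]
      congr 1; funext y; simp
    rw [← this, hfx]
  -- all weights on non-maximizers vanish
  have hzero : ∀ y ∈ T, f y ≠ c → wt y = 0 := by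
    by_contra hcon
    push_neg at hcon
    obtain ⟨y0, hy0T, hy0ne, hy0w⟩ := hcon
    have hy0pos : 0 < wt y0 := lt_of_le_of_ne (hw0 y0 hy0T) (Ne.symm hy0w)
    have hy0lt : f y0 < c := lt_of_le_of_ne (hub y0 hy0T) hy0ne
    have hlt : ∑ y ∈ T, wt y * f y < ∑ y ∈ T, wt y * c := by
      apply Finset.sum_lt_sum
      · intro i hi
        exact mul_le_mul_of_nonneg_left (hub i hi) (hw0 i hi)
      · exact ⟨y0, hy0T, by nlinarith⟩
    rw [← Finset.sum_mul, hw1, one_mul] at hlt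
    rw [hfsum] at hlt
    exact lt_irrefl _ hlt
  rw [Finset.mem_convexHull']
  refine ⟨wt, ?_, ?_, ?_⟩
  · intro y hy
    exact hw0 y (Finset.mem_filter.mp hy).1
  · rw [← hw1]
    apply Finset.sum_subset (Finset.filter_subset _ _)
    intro y hy hyn
    simp only [Finset.mem_filter, not_and] at hyn
    exact hzero y hy (hyn hy)
  · rw [← hsum]
    apply Finset.sum_subset (Finset.filter_subset _ _)
    intro y hy hyn
    simp only [Finset.mem_filter, not_and] at hyn
    rw [hzero y hy (hyn hy), zero_smul]

/-- uniqueness from a strictly exposing functional -/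
lemma eq_of_expose {T : Finset (RVec d)} {f : Lam d} {c : ℝ} {x₀ : RVec d}
    (hub : ∀ a ∈ T, f a ≤ c) (hstrict : ∀ a ∈ T, a ≠ x₀ → f a < c)
    {x : RVec d} (hx : x ∈ convexHull ℝ (T : Set (RVec d))) (hfx : f x = c) : x = x₀ := by
  classical
  have hmem := mem_convexHull_filter_eq hub hx hfx
  have hsub : ((T.filter (fun a => f a = c) : Finset (RVec d)) : Set (RVec d)) ⊆ {x₀} := by
    intro a ha
    simp only [Finset.coe_filter, Set.mem_setOf_eq] at ha
    by_contra hne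
    exact absurd ha.2 (ne_of_lt (hstrict a ha.1 hne))
  have := convexHull_mono hsub hmem
  rwa [convexHull_singleton] at this


lemma continuous_eval (a : RVec d) : Continuous (fun f : Lam d => f a) :=
  LinearMap.continuous_of_finiteDimensional
    ({ toFun := fun f : Lam d => f a
       map_add' := by intros; simp
       map_smul' := by intros; simp } : Lam d →ₗ[ℝ] ℝ)

/-- a linear functional attains its maximum over a compact convex set with finitely
many extreme points at an extreme point -/
lemma exists_extreme_max {K : Set (RVec d)} (hKco : IsCompact K) (hKconv : Convex ℝ K)
    (hne : K.Nonempty) (hfin : (K.extremePoints ℝ).Finite) (f : Lam d) :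
    ∃ v ∈ K.extremePoints ℝ, ∀ p ∈ K, f p ≤ f v := by
  classical
  have hKM : convexHull ℝ (K.extremePoints ℝ) = K := by
    have h1 := closure_convexHull_extremePoints hKco hKconv
    conv_rhs => rw [← h1]
    exact ((hfin.isCompact_convexHull ℝ).isClosed.closure_eq).symm
  have hEne : (K.extremePoints ℝ).Nonempty := by
    by_contra hcon
    rw [Set.not_nonempty_iff_eq_empty] at hcon
    rw [hcon, convexHull_empty] at hKM
    exact hne.ne_empty hKM.symm
  set Tf := hfin.toFinset with hTf
  have hTne : Tf.Nonempty := by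
    rwa [hTf, Set.Finite.toFinset_nonempty]
  obtain ⟨v, hvT, hvmax⟩ := Tf.exists_max_image f hTne
  refine ⟨v, ?_, ?_⟩
  · rwa [hTf, Set.Finite.mem_toFinset] at hvT
  · intro p hp
    rw [← hKM] at hp
    refine le_on_convexHull ?_ p hp
    intro a ha
    have : a ∈ Tf := by rwa [hTf, Set.Finite.mem_toFinset]
    exact hvmax a this

/-- characterization of `0` in the interior via positivity of the support function -/
lemma zero_mem_interior_iff {K : Set (RVec d)} (hKco : IsCompact K) (hKconv : Convex ℝ K)
    (hne0 : ∃ f : Lam d, f ≠ 0) :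
    (0 : RVec d) ∈ interior K ↔ ∀ f : Lam d, f ≠ 0 → ∃ x ∈ K, 0 < f x := by
  constructor
  · intro hint f hf
    obtain ⟨ε, hε, hball⟩ : ∃ ε > 0, Metric.ball (0 : RVec d) ε ⊆ K := by
      rw [mem_interior_iff_mem_nhds] at hint
      obtain ⟨ε, hε, h⟩ := Metric.mem_nhds_iff.mp hint
      exact ⟨ε, hε, h⟩
    have hx0 : ∃ x₀, 0 < f x₀ := by
      by_contra hcon
      push_neg at hcon
      apply hf
      ext x
      have h1 := hcon x
      have h2 := hcon (-x)
      rw [map_neg] at h2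
      simp only [ContinuousLinearMap.zero_apply]
      linarith
    obtain ⟨x₀, hx₀⟩ := hx0
    set c : ℝ := ε / (2 * (‖x₀‖ + 1)) with hc
    have hcpos : 0 < c := by
      apply div_pos hε
      positivity
    have hxball : c • x₀ ∈ Metric.ball (0 : RVec d) ε := by
      rw [Metric.mem_ball, dist_zero_right, norm_smul, Real.norm_eq_abs, abs_of_pos hcpos]
      have h1 : ‖x₀‖ < ‖x₀‖ + 1 := by linarith
      have h2 : 0 ≤ ‖x₀‖ := norm_nonneg _
      rw [hc]
      rw [div_mul_eq_mul_div, div_lt_iff₀ (by positivity)]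
      nlinarith
    refine ⟨c • x₀, hball hxball, ?_⟩
    rw [map_smul, smul_eq_mul]
    positivity
  · intro hpos
    by_contra hni
    rcases K.eq_empty_or_nonempty with hK | hKne
    · obtain ⟨f, hf⟩ := hne0
      obtain ⟨x, hx, _⟩ := hpos f hf
      rw [hK] at hx
      exact absurd hx (Set.notMem_empty x)
    obtain ⟨a₀, ha₀⟩ := hKne
    have hseq : ∀ n : ℕ, ∃ p, p ∉ K ∧ ‖p‖ < 1 / ((n : ℝ) + 1) := by
      intro n
      by_contra hcon
      push_neg at hcon
      apply hni
      have hball : Metric.ball (0 : RVec d) (1 / ((n : ℝ) + 1)) ⊆ K := by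
        intro q hq
        by_contra hqK
        have := hcon q hqK
        rw [Metric.mem_ball, dist_zero_right] at hq
        linarith
      have : Metric.ball (0 : RVec d) (1 / ((n : ℝ) + 1)) ⊆ interior K :=
        interior_maximal hball Metric.isOpen_ball
      apply this
      rw [Metric.mem_ball, dist_self]
      positivity
    choose p hpK hpn using hseq
    have hsep : ∀ n : ℕ, ∃ g : Lam d, ‖g‖ = 1 ∧ ∀ a ∈ K, g a < 1 / ((n : ℝ) + 1) := by
      intro n
      obtain ⟨f, u, hfa, hfu⟩ :=
        geometric_hahn_banach_closed_point hKconv hKco.isClosed (hpK n)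
      have hfne : f ≠ 0 := by
        intro h0
        rw [h0] at hfa hfu
        have h1 := hfa a₀ ha₀
        simp only [ContinuousLinearMap.zero_apply] at h1 hfu
        linarith
      have hfnorm : (0:ℝ) < ‖f‖ := norm_pos_iff.mpr hfne
      refine ⟨‖f‖⁻¹ • f, ?_, ?_⟩
      · have hns : ‖(‖f‖⁻¹ • f : Lam d)‖ = ‖(‖f‖⁻¹ : ℝ)‖ * ‖f‖ := norm_smul (‖f‖⁻¹) f
        rw [hns, Real.norm_eq_abs, abs_of_pos (inv_pos.mpr hfnorm), inv_mul_cancel₀ (ne_of_gt hfnorm)]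
      · intro a ha
        have h1 : ‖f‖⁻¹ * f a < ‖f‖⁻¹ * f (p n) := by
          apply mul_lt_mul_of_pos_left _ (inv_pos.mpr hfnorm)
          exact (hfa a ha).trans hfu
        have h2 : ‖f‖⁻¹ * f (p n) ≤ ‖p n‖ := by
          have h3 : f (p n) ≤ ‖f‖ * ‖p n‖ := by
            calc f (p n) ≤ |f (p n)| := le_abs_self _
            _ = ‖f (p n)‖ := (Real.norm_eq_abs _).symm
            _ ≤ ‖f‖ * ‖p n‖ := f.le_opNorm (p n)
          calc ‖f‖⁻¹ * f (p n) ≤ ‖f‖⁻¹ * (‖f‖ * ‖p n‖) :=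
                mul_le_mul_of_nonneg_left h3 (le_of_lt (inv_pos.mpr hfnorm))
          _ = ‖p n‖ := by field_simp
        have h4 : (‖f‖⁻¹ • f) a = ‖f‖⁻¹ * f a := by
          simp [ContinuousLinearMap.smul_apply]
        rw [h4]
        calc ‖f‖⁻¹ * f a < ‖f‖⁻¹ * f (p n) := h1
        _ ≤ ‖p n‖ := h2
        _ < 1 / ((n : ℝ) + 1) := hpn n
    choose g hg1 hgK using hsep
    have hsphere : ∀ n, g n ∈ Metric.sphere (0 : Lam d) 1 := by
      intro n
      rw [mem_sphere_iff_norm, sub_zero]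
      exact hg1 n
    obtain ⟨glim, hglimmem, φ, hφ, hconv⟩ :=
      (isCompact_sphere (0 : Lam d) 1).tendsto_subseq hsphere
    have hglimne : glim ≠ 0 := by
      intro h0
      rw [h0, mem_sphere_iff_norm, sub_zero, norm_zero] at hglimmem
      norm_num at hglimmem
    have hle : ∀ a ∈ K, glim a ≤ 0 := by
      intro a ha
      have hev : Filter.Tendsto (fun n => (g (φ n)) a) Filter.atTop (nhds (glim a)) :=
        ((continuous_eval a).tendsto glim).comp hconv
      have hub : Filter.Tendsto (fun n : ℕ => 1 / ((φ n : ℝ) + 1)) Filter.atTop (nhds 0) :=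
        tendsto_one_div_add_atTop_nhds_zero_nat.comp hφ.tendsto_atTop
      exact le_of_tendsto_of_tendsto hev hub
        (Filter.Eventually.of_forall fun n => le_of_lt (hgK (φ n) a ha))
    obtain ⟨x, hxK, hxpos⟩ := hpos glim hglimne
    linarith [hle x hxK]


/-- lattice points in a compact set are finite -/
lemma finite_lattice_of_isCompact {K : Set (RVec d)} (hK : IsCompact K) :
    {u : Fin d → ℤ | toR u ∈ K}.Finite := by
  obtain ⟨R, hR⟩ := hK.isBounded.subset_closedBall 0
  have hsub : {u : Fin d → ℤ | toR u ∈ K} ⊆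
      Set.pi Set.univ (fun _ : Fin d => Set.Icc (-⌈R⌉) ⌈R⌉) := by
    intro u hu
    intro i _
    have h1 : toR u ∈ Metric.closedBall 0 R := hR hu
    rw [Metric.mem_closedBall, dist_zero_right] at h1
    have h2 : |(u i : ℝ)| ≤ R := by
      have := norm_le_pi_norm (toR u) i
      rw [Real.norm_eq_abs] at this
      exact this.trans h1
    have h3 : |(u i : ℝ)| ≤ (⌈R⌉ : ℝ) := h2.trans (Int.le_ceil R)
    rw [abs_le] at h3
    constructor
    · exact_mod_cast h3.1
    · exact_mod_cast h3.2
  exact Set.Finite.subset (Set.Finite.pi (fun _ => Set.finite_Icc _ _)) hsub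


lemma isPrimitive_unshift {w u g : Fin d → ℤ} {h : ℤ} (hu : IsPrimitive (u + h • g))
    (hh : intDot w u = h) (hg : intDot w g = 0) : IsPrimitive u := by
  have h1 : intDot w (u + h • g) = h := by
    unfold intDot at *
    have e1 : ∀ i, w i * (u + h • g) i = w i * u i + h * (w i * g i) := by
      intro i; simp only [Pi.add_apply, Pi.smul_apply, smul_eq_mul]; ring
    rw [Finset.sum_congr rfl (fun i _ => e1 i), Finset.sum_add_distrib, ← Finset.mul_sum, hh, hg,
      mul_zero, add_zero]
  have h2 : intDot w (-g) = 0 := by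
    unfold intDot at *
    have e1 : ∀ i, w i * (-g) i = -(w i * g i) := by
      intro i; simp only [Pi.neg_apply]; ring
    rw [Finset.sum_congr rfl (fun i _ => e1 i), Finset.sum_neg_distrib, hg, neg_zero]
  have h3 := isPrimitive_shift hu h1 h2
  have h4 : u + h • g + h • (-g) = u := by
    funext i
    simp only [Pi.add_apply, Pi.smul_apply, Pi.neg_apply, smul_eq_mul]
    ring
  rwa [h4] at h3

/-- a strictly exposing functional at a designated generator which is an
extreme point -/
lemma exists_expose {T : Finset (Fin d → ℤ)} {K : Set (RVec d)}
    (hK : K = convexHull ℝ (toR '' (T : Set (Fin d → ℤ))))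
    {m : Fin d → ℤ} (hx : toR m ∈ Set.extremePoints ℝ K) :
    ∃ y : Lam d, ∀ a ∈ T, a ≠ m → y (toR a) < y (toR m) := by
  classical
  have hnotmem : toR m ∉ convexHull ℝ (toR '' ((T.erase m : Finset (Fin d → ℤ)) : Set (Fin d → ℤ))) := by
    intro hmem
    have hsub : convexHull ℝ (toR '' ((T.erase m : Finset (Fin d → ℤ)) : Set (Fin d → ℤ))) ⊆ K := by
      rw [hK]
      exact convexHull_mono (Set.image_mono (by
        intro a ha
        rw [Finset.mem_coe] at ha ⊢
        exact Finset.mem_of_mem_erase ha))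
    have hxe : toR m ∈ Set.extremePoints ℝ
        (convexHull ℝ (toR '' ((T.erase m : Finset (Fin d → ℤ)) : Set (Fin d → ℤ)))) := by
      refine ⟨hmem, ?_⟩
      intro a ha b hb hseg
      exact hx.2 (hsub ha) (hsub hb) hseg
    obtain ⟨m', hm', hme⟩ := extremePoints_convexHull_subset hxe
    rw [Finset.mem_coe] at hm'
    have : m' = m := toR_injective hme
    rw [this] at hm'
    exact (Finset.mem_erase.mp hm').1 rfl
  obtain ⟨f, u, hfa, hfu⟩ := geometric_hahn_banach_closed_point (convex_convexHull ℝ _)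
    (Set.Finite.isCompact_convexHull (𝕜 := ℝ)
      (((T.erase m : Finset (Fin d → ℤ)) : Set (Fin d → ℤ)).toFinite.image toR)).isClosed hnotmem
  refine ⟨f, fun a ha hne => ?_⟩
  refine lt_trans (hfa _ (subset_convexHull ℝ _ ⟨a, ?_, rfl⟩)) hfu
  rw [Finset.mem_coe, Finset.mem_erase]
  exact ⟨hne, ha⟩

end MutAux

open MutAux

set_option maxHeartbeats 2000000

/-- A lattice polytope `P` is Fano if and only if its combinatorial mutation
`mut_w(P, F)` is Fano. -/
theorem isFano_iff_isFano_mutation {d : ℕ} (P : Set (RVec d))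
    (hP : IsLatticePolytope P) (w : Fin d → ℤ) (hw : IsPrimitive w)
    (F : Set (RVec d)) (hF : IsFactorShape w F)
    (G : ℤ → Set (RVec d)) (hG : IsMutationWitness w F G P) :
    IsFano P ↔ IsFano (mutation w F G P) := by
  classical
  obtain ⟨SP, hSPne, hSPeq⟩ := hP
  obtain ⟨⟨SF, hSFne, hSFeq⟩, hF0⟩ := hF
  set Q := mutation w F G P with hQdef
  -- w is nonzero, hence a nonzero functional exists
  have hwne : w ≠ 0 := by
    intro h0
    rw [h0] at hw
    unfold IsPrimitive at hw
    have h1 : Finset.univ.gcd (0 : Fin d → ℤ) = 0 :=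
      Finset.gcd_eq_zero_iff.mpr (fun i _ => rfl)
    rw [h1] at hw
    exact absurd hw (by norm_num)
  have hwlinne : wlin w ≠ 0 := by
    intro h0
    apply hwne
    funext i
    have := congrArg (fun f : Lam d => f (toR (Pi.single i 1))) h0
    simp only [ContinuousLinearMap.zero_apply] at this
    rw [wlin_apply, pairR_toR] at this
    have h2 : intDot w (Pi.single i 1) = w i := by
      unfold intDot
      rw [Finset.sum_eq_single i]
      · simp
      · intro b _ hb; simp [Pi.single_eq_of_ne hb]
      · intro hb; exact absurd (Finset.mem_univ i) hb
    rw [h2] at this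
    exact_mod_cast this
  have hne0 : ∃ f : Lam d, f ≠ 0 := ⟨wlin w, hwlinne⟩
  -- basic convexity and compactness
  have hPconv : Convex ℝ P := hSPeq ▸ convex_convexHull ℝ _
  have hPcomp : IsCompact P := by
    rw [hSPeq]
    exact Set.Finite.isCompact_convexHull (𝕜 := ℝ) (((SP : Set (Fin d → ℤ)).toFinite).image toR)
  have hPne : P.Nonempty := by
    obtain ⟨s, hs⟩ := hSPne
    exact ⟨toR s, hSPeq ▸ subset_convexHull ℝ _ ⟨s, hs, rfl⟩⟩
  -- F facts
  have hFmem : ∀ g ∈ SF, toR g ∈ F := fun g hg =>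
    hSFeq ▸ subset_convexHull ℝ _ ⟨g, hg, rfl⟩
  have hFne : F.Nonempty := by
    obtain ⟨g, hg⟩ := hSFne
    exact ⟨toR g, hFmem g hg⟩
  have hFdot0 : ∀ g ∈ SF, intDot w g = 0 := by
    intro g hg
    have := hF0 (toR g) (hFmem g hg)
    rw [pairR_toR] at this
    exact_mod_cast this
  have hFflat : ∀ x ∈ F, wlin w x = 0 := fun x hx => by
    rw [wlin_apply]; exact hF0 x hx
  -- lattice points of P
  have hLPfin : {u : Fin d → ℤ | toR u ∈ P}.Finite := finite_lattice_of_isCompact hPcomp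
  set LP : Finset (Fin d → ℤ) := hLPfin.toFinset with hLPdef
  set LPh : ℤ → Finset (Fin d → ℤ) := fun h => LP.filter (fun u => intDot w u = h) with hLPhdef
  have hLPh_mem : ∀ (h : ℤ) (u : Fin d → ℤ), u ∈ LPh h ↔ toR u ∈ P ∧ intDot w u = h := by
    intro h u
    rw [hLPhdef]
    simp only [Finset.mem_filter, hLPdef, Set.Finite.mem_toFinset, Set.mem_setOf_eq]
  have hslice : ∀ h : ℤ, heightSlice w h P = convexHull ℝ (toR '' ((LPh h : Set (Fin d → ℤ)))) := by
    intro h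
    have hsets : {u : Fin d → ℤ | toR u ∈ P ∧ pairR w (toR u) = (h : ℝ)} =
        ((LPh h : Set (Fin d → ℤ))) := by
      ext u
      rw [Set.mem_setOf_eq, Finset.mem_coe, hLPh_mem, pairR_toR]
      constructor
      · rintro ⟨h1, h2⟩
        exact ⟨h1, by exact_mod_cast h2⟩
      · rintro ⟨h1, h2⟩
        exact ⟨h1, by exact_mod_cast h2⟩
    unfold heightSlice
    rw [hsets]
  have hslice_sub : ∀ h : ℤ, heightSlice w h P ⊆ P := by
    intro h
    unfold heightSlice
    apply convexHull_min _ hPconv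
    rintro x ⟨u, hu, rfl⟩
    exact hu.1
  have hslice_ht : ∀ h : ℤ, ∀ x ∈ heightSlice w h P, wlin w x = (h : ℝ) := by
    intro h x hx
    refine eq_on_convexHull ?_ x hx
    rintro a ⟨u, hu, rfl⟩
    rw [wlin_apply]
    exact hu.2
  have hslice_memP : ∀ (u : Fin d → ℤ), toR u ∈ P → toR u ∈ heightSlice w (intDot w u) P := by
    intro u hu
    exact subset_convexHull ℝ _ ⟨u, ⟨hu, pairR_toR w u⟩, rfl⟩
  -- the tropical map ψ on functionals
  have hSFine : (SF.image (fun g => (0:Lam d) (toR g))).Nonempty := hSFne.image _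
  set maxF : Lam d → ℝ := fun f => ((SF.image (fun g => f (toR g))).max' (hSFne.image _)) with hmaxFdef
  have hmaxF_leS : ∀ f : Lam d, ∀ g ∈ SF, f (toR g) ≤ maxF f := by
    intro f g hg
    exact Finset.le_max' (SF.image (fun g => f (toR g))) (f (toR g))
      (Finset.mem_image_of_mem _ hg)
  have hmaxF_le : ∀ f : Lam d, ∀ x ∈ F, f x ≤ maxF f := by
    intro f x hx
    rw [hSFeq] at hx
    refine le_on_convexHull ?_ x hx
    rintro a ⟨g, hg, rfl⟩
    exact hmaxF_leS f g hg
  have hmaxF_mem : ∀ f : Lam d, ∃ g ∈ SF, f (toR g) = maxF f := by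
    intro f
    have := (SF.image (fun g => f (toR g))).max'_mem (hSFne.image _)
    rw [Finset.mem_image] at this
    obtain ⟨g, hg, hg2⟩ := this
    exact ⟨g, hg, hg2⟩
  set psi : Lam d → Lam d := fun f => f + (maxF f) • (wlin w) with hpsidef
  have hpsi_apply : ∀ (f : Lam d) (x : RVec d), psi f x = f x + maxF f * wlin w x := by
    intro f x
    rw [hpsidef]
    simp only [ContinuousLinearMap.add_apply, ContinuousLinearMap.coe_smul', Pi.smul_apply,
      smul_eq_mul]
  have hmaxF_eq_of_agree : ∀ f f' : Lam d, (∀ g ∈ SF, f (toR g) = f' (toR g)) → maxF f = maxF f' := by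
    intro f f' hag
    apply le_antisymm
    · apply Finset.max'_le
      intro y hy
      rw [Finset.mem_image] at hy
      obtain ⟨g, hg, rfl⟩ := hy
      rw [hag g hg]
      exact hmaxF_leS f' g hg
    · apply Finset.max'_le
      intro y hy
      rw [Finset.mem_image] at hy
      obtain ⟨g, hg, rfl⟩ := hy
      rw [← hag g hg]
      exact hmaxF_leS f g hg
  have hpsi_maxF : ∀ f : Lam d, maxF (psi f) = maxF f := by
    intro f
    apply hmaxF_eq_of_agree
    intro g hg
    rw [hpsi_apply]
    rw [hFflat (toR g) (hFmem g hg)]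
    ring
  have hpsi_surj : ∀ z : Lam d, psi (z - maxF z • wlin w) = z := by
    intro z
    have hag : ∀ g ∈ SF, (z - maxF z • wlin w) (toR g) = z (toR g) := by
      intro g hg
      simp only [ContinuousLinearMap.sub_apply, ContinuousLinearMap.coe_smul', Pi.smul_apply,
        smul_eq_mul]
      rw [hFflat (toR g) (hFmem g hg)]
      ring
    have hmeq : maxF (z - maxF z • wlin w) = maxF z := hmaxF_eq_of_agree _ _ hag
    have : psi (z - maxF z • wlin w) =
        (z - maxF z • wlin w) + maxF (z - maxF z • wlin w) • wlin w := by rw [hpsidef]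
    rw [this, hmeq]
    abel
  have hpsi_ne : ∀ f : Lam d, f ≠ 0 → psi f ≠ 0 := by
    intro f hf h0
    have hz : ∀ g ∈ SF, f (toR g) = 0 := by
      intro g hg
      have h1 : psi f (toR g) = 0 := by rw [h0]; rfl
      rw [hpsi_apply, hFflat (toR g) (hFmem g hg), mul_zero, add_zero] at h1
      exact h1
    have hm : maxF f = 0 := by
      obtain ⟨g0, hg0, hgeq⟩ := hmaxF_mem f
      rw [← hgeq]
      exact hz g0 hg0
    have hfeq : psi f = f + maxF f • wlin w := by rw [hpsidef]
    rw [h0, hm, zero_smul, add_zero] at hfeq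
    exact hf hfeq.symm
  -- the generating union of Q
  set U : Set (RVec d) := (⋃ (h : ℤ) (_ : h < 0), G h) ∪
      ⋃ h : ℕ, (heightSlice w (h : ℤ) P + (h : ℝ) • F) with hUdef
  have hQU : Q = convexHull ℝ U := rfl
  have hUQ : U ⊆ Q := hQU ▸ subset_convexHull ℝ U
  have hQconv : Convex ℝ Q := hQU ▸ convex_convexHull ℝ _
  have hmemG : ∀ h : ℤ, h < 0 → ∀ x ∈ G h, x ∈ U := by
    intro h hh x hx
    left
    exact Set.mem_biUnion hh hx
  have hmemS : ∀ n : ℕ, ∀ s ∈ heightSlice w (n : ℤ) P, ∀ g ∈ F, s + (n : ℝ) • g ∈ U := by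
    intro n s hs g hg
    right
    refine Set.mem_iUnion.mpr ⟨n, ?_⟩
    exact Set.add_mem_add hs (Set.smul_mem_smul_set hg)
  -- heights of elements of G h
  have hG_ht : ∀ h : ℤ, h < 0 → ∀ x ∈ G h, wlin w x = (h : ℝ) := by
    intro h hh x hx
    obtain ⟨g0, hg0⟩ := hSFne
    have h1 : x + (-h : ℝ) • toR g0 ∈ heightSlice w h P :=
      (hG h hh).2.2 (Set.add_mem_add hx (Set.smul_mem_smul_set (hFmem g0 hg0)))
    have h2 := hslice_ht h _ h1
    rw [map_add, map_smul, hFflat (toR g0) (hFmem g0 hg0), smul_eq_mul, mul_zero, add_zero] at h2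
    exact h2
  -- membership of a slice point plus a scaled factor point in U, for h ≥ 0 in ℤ form
  have hmemS' : ∀ hh : ℤ, 0 ≤ hh → ∀ s ∈ heightSlice w hh P, ∀ g ∈ F, s + (hh : ℝ) • g ∈ U := by
    intro hh h0 s hs g hg
    have hnat : ((hh.toNat : ℤ)) = hh := Int.toNat_of_nonneg h0
    have h1 := hmemS hh.toNat s (by rw [hnat]; exact hs) g hg
    have h2 : ((hh.toNat : ℕ) : ℝ) = (hh : ℝ) := by exact_mod_cast congrArg (fun z : ℤ => (z : ℝ)) hnat
    rwa [h2] at h1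
  -- extreme points of P
  set EP : Set (RVec d) := Set.extremePoints ℝ P with hEPdef
  have hEPsub : EP ⊆ toR '' (SP : Set (Fin d → ℤ)) := by
    rw [hEPdef, hSPeq]
    exact extremePoints_convexHull_subset
  have hEPfin : EP.Finite := Set.Finite.subset (((SP : Set (Fin d → ℤ)).toFinite).image toR) hEPsub
  have hKMP : convexHull ℝ EP = P := by
    have h1 := closure_convexHull_extremePoints hPcomp hPconv
    conv_rhs => rw [← h1]
    exact ((hEPfin.isCompact_convexHull ℝ).isClosed.closure_eq).symm
  -- the sandwich condition in usable form
  have hsand : ∀ v ∈ EP, ∀ hv : ℤ, hv < 0 → wlin w v = (hv : ℝ) →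
      ∃ gg ∈ G hv, ∃ ff ∈ F, v = gg + (-hv : ℝ) • ff := by
    intro v hvEP hv hneg hht
    have h1 : v ∈ G hv + (-hv : ℝ) • F := by
      apply (hG hv hneg).2.1
      refine ⟨hvEP, ?_⟩
      rw [← wlin_apply]
      exact hht
    rw [Set.mem_add] at h1
    obtain ⟨gg, hgg, fs, hfs, heq⟩ := h1
    obtain ⟨ff, hff, rfl⟩ := hfs
    exact ⟨gg, hgg, ff, hff, heq.symm⟩
  -- key transfer inequalities
  have key1 : ∀ (f : Lam d) (c : ℝ), (∀ p ∈ P, psi f p ≤ c) → ∀ q ∈ Q, f q ≤ c := by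
    intro f c hPb q hq
    rw [hQU] at hq
    refine le_on_convexHull ?_ q hq
    rintro a (haG | haS)
    · rw [Set.mem_iUnion] at haG
      obtain ⟨h, haG⟩ := haG
      rw [Set.mem_iUnion] at haG
      obtain ⟨hh, ha⟩ := haG
      obtain ⟨g0, hg0, hgmax⟩ := hmaxF_mem f
      set p := a + (-h : ℝ) • toR g0 with hpdef
      have hpP : p ∈ P := hslice_sub h
        ((hG h hh).2.2 (Set.add_mem_add ha (Set.smul_mem_smul_set (hFmem g0 hg0))))
      have hph : wlin w p = (h : ℝ) := hslice_ht h _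
        ((hG h hh).2.2 (Set.add_mem_add ha (Set.smul_mem_smul_set (hFmem g0 hg0))))
      have hcalc : f a = psi f p := by
        rw [hpsi_apply, hph, hpdef, map_add, map_smul, smul_eq_mul, hgmax]
        ring
      rw [hcalc]
      exact hPb p hpP
    · rw [Set.mem_iUnion] at haS
      obtain ⟨n, ha⟩ := haS
      rw [Set.mem_add] at ha
      obtain ⟨sg, hsg, fs, hfs, heq⟩ := ha
      obtain ⟨gf, hgf, rfl⟩ := hfs
      have hsgP : sg ∈ P := hslice_sub _ hsg
      have hsgh : wlin w sg = ((n : ℤ) : ℝ) := hslice_ht _ _ hsg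
      have h1 : f a ≤ psi f sg := by
        rw [← heq, map_add, map_smul, hpsi_apply, hsgh]
        push_cast
        have h2 : f gf ≤ maxF f := hmaxF_le f gf hgf
        have h3 : (0:ℝ) ≤ (n:ℝ) := Nat.cast_nonneg n
        simp only [smul_eq_mul]
        nlinarith
      exact h1.trans (hPb sg hsgP)
  have key2 : ∀ (f : Lam d) (c : ℝ), (∀ q ∈ Q, f q ≤ c) → ∀ p ∈ P, psi f p ≤ c := by
    intro f c hQb p hp
    rw [← hKMP] at hp
    have hpsilin : psi f p ≤ c := by
      refine le_on_convexHull (f := psi f) ?_ p hp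
      intro v hv
      have hvP : v ∈ P := extremePoints_subset hv
      obtain ⟨uv, huvSP, rfl⟩ := hEPsub hv
      set hh : ℤ := intDot w uv with hhdef
      have hht : wlin w (toR uv) = (hh : ℝ) := by rw [wlin_apply, pairR_toR]
      rcases le_or_gt 0 hh with h0 | h0
      · obtain ⟨g0, hg0, hgmax⟩ := hmaxF_mem f
        have hqU : toR uv + (hh : ℝ) • toR g0 ∈ U :=
          hmemS' hh h0 _ (hslice_memP uv hvP) _ (hFmem g0 hg0)
        have hcalc : psi f (toR uv) = f (toR uv + (hh : ℝ) • toR g0) := by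
          rw [hpsi_apply, hht, map_add, map_smul, smul_eq_mul, hgmax]
          ring
        rw [hcalc]
        exact hQb _ (hUQ hqU)
      · obtain ⟨gg, hgg, ff, hff, heq⟩ := hsand (toR uv) hv hh h0 hht
        have hcalc : psi f (toR uv) ≤ f gg := by
          rw [hpsi_apply, hht, heq, map_add, map_smul, smul_eq_mul]
          have h2 : f ff ≤ maxF f := hmaxF_le f ff hff
          have h3 : (0:ℝ) ≤ (-hh : ℝ) := by
            have h4 : ((hh : ℝ)) < 0 := by exact_mod_cast h0
            push_cast
            linarith
          nlinarith
        exact hcalc.trans (hQb gg (hUQ (hmemG hh h0 gg hgg)))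
    exact hpsilin
  -- the finite lattice generating set of Q
  obtain ⟨TQ, hTQeq, hTQprov⟩ :
      ∃ TQ : Finset (Fin d → ℤ), Q = convexHull ℝ (toR '' (TQ : Set (Fin d → ℤ))) ∧
        ∀ m ∈ TQ, (∃ h : ℤ, h < 0 ∧ toR m ∈ G h) ∨
          (∃ h : ℤ, 0 ≤ h ∧ ∃ u ∈ LPh h, ∃ g ∈ SF, m = u + h • g) := by
    -- choose generators for the nonempty G h
    have hSGex : ∀ h : ℤ, ∃ Sg : Finset (Fin d → ℤ),
        (h < 0 → (G h).Nonempty → G h = convexHull ℝ (toR '' (Sg : Set (Fin d → ℤ)))) ∧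
        (¬(h < 0 ∧ (G h).Nonempty) → Sg = ∅) := by
      intro h
      by_cases hneg : h < 0
      · rcases (hG h hneg).1 with hemp | ⟨S, hSne, hSeq⟩
        · refine ⟨∅, fun _ hne => absurd hemp hne.ne_empty, fun _ => rfl⟩
        · refine ⟨S, fun _ _ => hSeq, fun hcon => ?_⟩
          exfalso
          apply hcon
          refine ⟨hneg, ?_⟩
          rw [hSeq]
          obtain ⟨s0, hs0⟩ := hSne
          exact ⟨toR s0, subset_convexHull ℝ _ ⟨s0, hs0, rfl⟩⟩
      · exact ⟨∅, fun hh => absurd hh hneg, fun _ => rfl⟩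
    choose SG hSG1 hSG2 using hSGex
    -- the finite set of heights
    set Hs : Finset ℤ := LP.image (intDot w) with hHsdef
    have hHsmem : ∀ u : Fin d → ℤ, toR u ∈ P → intDot w u ∈ Hs := by
      intro u hu
      exact Finset.mem_image_of_mem _ ((Set.Finite.mem_toFinset hLPfin).mpr hu)
    have hLPhHs : ∀ h : ℤ, (LPh h).Nonempty → h ∈ Hs := by
      intro h hne
      obtain ⟨u, hu⟩ := hne
      rw [hLPh_mem] at hu
      rw [← hu.2]
      exact hHsmem u hu.1
    have hGHs : ∀ h : ℤ, h < 0 → (G h).Nonempty → h ∈ Hs := by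
      intro h hneg hne
      obtain ⟨a, ha⟩ := hne
      obtain ⟨g0, hg0⟩ := hSFne
      have h1 : a + (-h : ℝ) • toR g0 ∈ heightSlice w h P :=
        (hG h hneg).2.2 (Set.add_mem_add ha (Set.smul_mem_smul_set (hFmem g0 hg0)))
      rw [hslice h] at h1
      apply hLPhHs
      by_contra hcon
      rw [Finset.not_nonempty_iff_eq_empty] at hcon
      rw [hcon] at h1
      simp only [Finset.coe_empty, Set.image_empty, convexHull_empty] at h1
      exact h1
    refine ⟨((Hs.filter (fun h => h < 0)).biUnion (fun h => SG h)) ∪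
      ((Hs.filter (fun h => 0 ≤ h)).biUnion (fun h =>
        Finset.image (fun pr : (Fin d → ℤ) × (Fin d → ℤ) => pr.1 + h • pr.2)
          ((LPh h) ×ˢ SF))), ?_, ?_⟩
    · -- Q equals the hull of the generators
      apply Set.Subset.antisymm
      · -- Q ⊆ hull
        rw [hQU]
        apply convexHull_min _ (convex_convexHull ℝ _)
        rintro a (haG | haS)
        · rw [Set.mem_iUnion] at haG
          obtain ⟨h, haG⟩ := haG
          rw [Set.mem_iUnion] at haG
          obtain ⟨hneg, ha⟩ := haG
          have hne : (G h).Nonempty := ⟨a, ha⟩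
          have hHs : h ∈ Hs := hGHs h hneg hne
          have hGeq := hSG1 h hneg hne
          rw [hGeq] at ha
          refine convexHull_mono ?_ ha
          apply Set.image_mono
          intro m hm
          rw [Finset.coe_union]
          left
          rw [Finset.coe_biUnion]
          exact Set.mem_biUnion (by rw [Finset.coe_filter]; exact ⟨hHs, hneg⟩) hm
        · rw [Set.mem_iUnion] at haS
          obtain ⟨n, ha⟩ := haS
          rw [Set.mem_add] at ha
          obtain ⟨sg, hsg, fs, hfs, heq⟩ := ha
          obtain ⟨gf, hgf, rfl⟩ := hfs
          rw [hslice] at hsg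
          have hLPhne : (LPh (n : ℤ)).Nonempty := by
            by_contra hcon
            rw [Finset.not_nonempty_iff_eq_empty] at hcon
            rw [hcon] at hsg
            simp only [Finset.coe_empty, Set.image_empty, convexHull_empty] at hsg
            exact hsg
          have hHs : (n : ℤ) ∈ Hs := hLPhHs _ hLPhne
          -- rewrite the sum of hulls as the hull of the sum
          have hmem2 : a ∈ convexHull ℝ (toR '' ((LPh (n:ℤ)) : Set (Fin d → ℤ)))
              + (n : ℝ) • convexHull ℝ (toR '' (SF : Set (Fin d → ℤ))) := by
            rw [← heq]
            apply Set.add_mem_add hsg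
            apply Set.smul_mem_smul_set
            rw [← hSFeq]
            exact hgf
          rw [← convexHull_smul, ← convexHull_add] at hmem2
          refine convexHull_mono ?_ hmem2
          rintro x ⟨x1, hx1, x2, hx2, rfl⟩
          obtain ⟨u, hu, rfl⟩ := hx1
          obtain ⟨x2', hx2', rfl⟩ := hx2
          obtain ⟨g, hg, rfl⟩ := hx2'
          refine ⟨u + (n : ℤ) • g, ?_, ?_⟩
          · rw [Finset.mem_coe, Finset.mem_union]
            right
            rw [Finset.mem_biUnion]
            refine ⟨(n : ℤ), Finset.mem_filter.mpr ⟨hHs, Int.ofNat_nonneg n⟩, ?_⟩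
            rw [Finset.mem_image]
            exact ⟨(u, g), Finset.mem_product.mpr ⟨hu, hg⟩, rfl⟩
          · rw [toR_add, toR_zsmul]
            push_cast
            rfl
      · -- hull ⊆ Q
        apply convexHull_min _ hQconv
        rintro x ⟨m, hm, rfl⟩
        rw [Finset.mem_coe, Finset.mem_union] at hm
        rcases hm with hm | hm
        · rw [Finset.mem_biUnion] at hm
          obtain ⟨h, hh, hmS⟩ := hm
          rw [Finset.mem_filter] at hh
          rcases Set.eq_empty_or_nonempty (G h) with hemp | hne
          · exfalso
            have := hSG2 h (fun hc => hc.2.ne_empty hemp)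
            rw [this] at hmS
            exact absurd hmS (Finset.notMem_empty m)
          · have hGeq := hSG1 h hh.2 hne
            have : toR m ∈ G h := by
              rw [hGeq]
              exact subset_convexHull ℝ _ ⟨m, hmS, rfl⟩
            exact hUQ (hmemG h hh.2 _ this)
        · rw [Finset.mem_biUnion] at hm
          obtain ⟨h, hh, hmS⟩ := hm
          rw [Finset.mem_filter] at hh
          rw [Finset.mem_image] at hmS
          obtain ⟨⟨u, g⟩, hug, heq⟩ := hmS
          rw [Finset.mem_product] at hug
          have hu := hug.1
          have hg := hug.2
          rw [hLPh_mem] at hu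
          have h1 : toR u ∈ heightSlice w h P := by
            rw [← hu.2]
            exact hslice_memP u hu.1
          have h2 := hmemS' h hh.2 _ h1 _ (hFmem g hg)
          rw [← heq, toR_add, toR_zsmul]
          exact hUQ h2
    · -- provenance
      intro m hm
      rw [Finset.mem_union] at hm
      rcases hm with hm | hm
      · rw [Finset.mem_biUnion] at hm
        obtain ⟨h, hh, hmS⟩ := hm
        rw [Finset.mem_filter] at hh
        rcases Set.eq_empty_or_nonempty (G h) with hemp | hne
        · exfalso
          have := hSG2 h (fun hc => hc.2.ne_empty hemp)
          rw [this] at hmS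
          exact absurd hmS (Finset.notMem_empty m)
        · left
          refine ⟨h, hh.2, ?_⟩
          rw [hSG1 h hh.2 hne]
          exact subset_convexHull ℝ _ ⟨m, hmS, rfl⟩
      · rw [Finset.mem_biUnion] at hm
        obtain ⟨h, hh, hmS⟩ := hm
        rw [Finset.mem_filter] at hh
        rw [Finset.mem_image] at hmS
        obtain ⟨⟨u, g⟩, hug, heq⟩ := hmS
        rw [Finset.mem_product] at hug
        right
        exact ⟨h, hh.2, u, hug.1, g, hug.2, heq.symm⟩
  have hQcomp : IsCompact Q := by
    rw [hTQeq]
    exact Set.Finite.isCompact_convexHull (𝕜 := ℝ) (((TQ : Set (Fin d → ℤ)).toFinite).image toR)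
  -- extreme points of Q
  set EQ : Set (RVec d) := Set.extremePoints ℝ Q with hEQdef
  have hEQsub : EQ ⊆ toR '' (TQ : Set (Fin d → ℤ)) := by
    rw [hEQdef, hTQeq]
    exact extremePoints_convexHull_subset
  have hEQfin : EQ.Finite := Set.Finite.subset (((TQ : Set (Fin d → ℤ)).toFinite).image toR) hEQsub
  -- interior transfer
  have hint : ((0 : RVec d) ∈ interior P) ↔ ((0 : RVec d) ∈ interior Q) := by
    rw [zero_mem_interior_iff hPcomp hPconv hne0, zero_mem_interior_iff hQcomp hQconv hne0]
    have hpsi0 : psi 0 = 0 := by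
      have hm0 : maxF (0 : Lam d) = 0 := by
        obtain ⟨g0, hg0, hgeq⟩ := hmaxF_mem (0 : Lam d)
        rw [← hgeq]
        rfl
      have : psi (0 : Lam d) = (0 : Lam d) + maxF (0 : Lam d) • wlin w := by rw [hpsidef]
      rw [this, hm0, zero_smul, add_zero]
    constructor
    · intro hp f hf
      by_contra hcon
      push_neg at hcon
      obtain ⟨x, hxP, hxpos⟩ := hp (psi f) (hpsi_ne f hf)
      have h1 := key2 f 0 (fun q hq => (hcon q hq)) x hxP
      linarith
    · intro hq z hz
      set f := z - maxF z • wlin w with hfdef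
      have hfz : psi f = z := hpsi_surj z
      have hfne : f ≠ 0 := by
        intro h0
        apply hz
        rw [← hfz, h0, hpsi0]
      obtain ⟨x, hxQ, hxpos⟩ := hq f hfne
      by_contra hcon
      push_neg at hcon
      have h1 := key1 f 0 (fun p hp => by rw [hfz]; exact hcon p hp) x hxQ
      linarith
  constructor
  · rintro ⟨hP0, hPv⟩
    refine ⟨hint.mp hP0, ?_⟩
    intro x hx
    obtain ⟨m, hmTQ', hmeq⟩ := hEQsub hx
    rw [Finset.mem_coe] at hmTQ'
    subst hmeq
    obtain ⟨y, hy⟩ := exists_expose hTQeq hx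
    set c := y (toR m) with hcdef
    have hub : ∀ a ∈ toR '' ((TQ : Set (Fin d → ℤ))), y a ≤ c := by
      rintro a ⟨t, ht, rfl⟩
      rw [Finset.mem_coe] at ht
      rcases eq_or_ne t m with rfl | hne
      · exact le_rfl
      · exact (hy t ht hne).le
    have hQb : ∀ q ∈ Q, y q ≤ c := by
      rw [hTQeq]
      exact fun q hq => le_on_convexHull hub q hq
    have huniq : ∀ q ∈ Q, y q = c → q = toR m := by
      intro q hq hqc
      refine eq_of_expose (T := TQ.image toR) (f := y) (c := c) (x₀ := toR m) ?_ ?_ ?_ hqc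
      · intro a ha
        obtain ⟨t, ht, rfl⟩ := Finset.mem_image.mp ha
        exact hub _ ⟨t, Finset.mem_coe.mpr ht, rfl⟩
      · intro a ha hne
        rw [Finset.mem_image] at ha
        obtain ⟨t, ht, rfl⟩ := ha
        have htm : t ≠ m := fun hc => hne (by rw [hc])
        exact hy t ht htm
      · rw [Finset.coe_image]
        rw [hTQeq] at hq
        exact hq
    have hmQ : toR m ∈ Q := extremePoints_subset hx
    have hPb := key2 y c hQb
    obtain ⟨v, hvEP, hvmax⟩ := exists_extreme_max hPcomp hPconv hPne hEPfin (psi y)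
    have hvc : psi y v = c := by
      refine le_antisymm (hPb v (extremePoints_subset hvEP)) ?_
      exact key1 y (psi y v) (fun p hp => hvmax p hp) (toR m) hmQ
    obtain ⟨uv, hturv, hprim⟩ := hPv v hvEP
    have hvP : toR uv ∈ P := by rw [hturv]; exact extremePoints_subset hvEP
    have hht : wlin w v = ((intDot w uv : ℤ) : ℝ) := by
      rw [← hturv, wlin_apply, pairR_toR]
    rcases le_or_gt 0 (intDot w uv) with h0 | h0
    · obtain ⟨g0, hg0, hgmax⟩ := hmaxF_mem y
      have hqU : toR uv + ((intDot w uv : ℤ) : ℝ) • toR g0 ∈ U :=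
        hmemS' _ h0 _ (hslice_memP uv hvP) _ (hFmem g0 hg0)
      have hyx : y (toR uv + ((intDot w uv : ℤ) : ℝ) • toR g0) = c := by
        rw [map_add, map_smul, smul_eq_mul, hgmax, ← hvc, hpsi_apply, hht, ← hturv]
        ring
      have heqm := huniq _ (hUQ hqU) hyx
      have heqm' : toR (uv + (intDot w uv) • g0) = toR m := by
        rw [toR_add, toR_zsmul]
        exact heqm
      have hmval : m = uv + (intDot w uv) • g0 := (toR_injective heqm').symm
      refine ⟨m, rfl, ?_⟩
      rw [hmval]
      exact isPrimitive_shift hprim rfl (hFdot0 g0 hg0)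
    · obtain ⟨gg, hgg, ff, hff, heq⟩ := hsand v hvEP _ h0 hht
      have hggQ : gg ∈ Q := hUQ (hmemG _ h0 gg hgg)
      have hyff_le : y ff ≤ maxF y := hmaxF_le y ff hff
      have e1 : y v = y gg + (-((intDot w uv : ℤ) : ℝ)) * y ff := by
        rw [heq, map_add, map_smul, smul_eq_mul]
      have e2 : psi y v = y v + maxF y * ((intDot w uv : ℤ) : ℝ) := by
        rw [hpsi_apply, hht]
      have hhneg : (((intDot w uv : ℤ) : ℝ)) < 0 := by exact_mod_cast h0
      have e3 : c - y gg = (-((intDot w uv : ℤ) : ℝ)) * (y ff - maxF y) := by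
        rw [← hvc, e2, e1]; ring
      have hygg_le : y gg ≤ c := hQb gg hggQ
      have hyggc : y gg = c := by nlinarith
      have hyffmax : y ff = maxF y := by nlinarith
      have hggm : gg = toR m := huniq gg hggQ hyggc
      have hffE : ff ∈ Set.extremePoints ℝ F := by
        refine ⟨hff, ?_⟩
        intro a ha b hb hseg
        obtain ⟨ta, tb, hta, htb, htab, hcomb⟩ := hseg
        have hmodule : ta • (gg + (-((intDot w uv : ℤ) : ℝ)) • a)
            + tb • (gg + (-((intDot w uv : ℤ) : ℝ)) • b)
            = (ta + tb) • gg + (-((intDot w uv : ℤ) : ℝ)) • (ta • a + tb • b) := by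
          module
        have hseg2 : v ∈ openSegment ℝ (gg + (-((intDot w uv : ℤ) : ℝ)) • a)
            (gg + (-((intDot w uv : ℤ) : ℝ)) • b) := by
          refine ⟨ta, tb, hta, htb, htab, ?_⟩
          rw [hmodule, htab, one_smul, hcomb, ← heq]
        have haP : gg + (-((intDot w uv : ℤ) : ℝ)) • a ∈ P :=
          hslice_sub _ ((hG _ h0).2.2 (Set.add_mem_add hgg (Set.smul_mem_smul_set ha)))
        have hbP : gg + (-((intDot w uv : ℤ) : ℝ)) • b ∈ P :=
          hslice_sub _ ((hG _ h0).2.2 (Set.add_mem_add hgg (Set.smul_mem_smul_set hb)))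
        have hres := hvEP.2 haP hbP hseg2
        have hsne : (-((intDot w uv : ℤ) : ℝ)) ≠ 0 := by linarith
        have h5 := hres
        rw [heq] at h5
        have h6 : (-((intDot w uv : ℤ) : ℝ)) • a = (-((intDot w uv : ℤ) : ℝ)) • ff :=
          add_left_cancel h5
        exact smul_right_injective (RVec d) hsne h6
      have hffT : ff ∈ toR '' ((SF : Set (Fin d → ℤ))) := by
        rw [hSFeq] at hffE
        exact extremePoints_convexHull_subset hffE
      obtain ⟨gf, hgf, hgfeq⟩ := hffT
      rw [Finset.mem_coe] at hgf
      have hggval : gg = v + ((intDot w uv : ℤ) : ℝ) • ff := by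
        rw [heq]; module
      have hmeq2 : toR m = toR (uv + (intDot w uv) • gf) := by
        rw [toR_add, toR_zsmul, hturv, hgfeq, ← hggm, hggval]
      have hmval : m = uv + (intDot w uv) • gf := toR_injective hmeq2
      refine ⟨m, rfl, ?_⟩
      rw [hmval]
      exact isPrimitive_shift hprim rfl (hFdot0 gf hgf)
  · rintro ⟨hQ0, hQv⟩
    refine ⟨hint.mpr hQ0, ?_⟩
    intro x hxEP
    obtain ⟨uv, huvSP, hmeq⟩ := hEPsub hxEP
    rw [Finset.mem_coe] at huvSP
    subst hmeq
    refine ⟨uv, rfl, ?_⟩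
    obtain ⟨z, hz⟩ := exists_expose hSPeq hxEP
    set c := z (toR uv) with hcdef
    have hub : ∀ a ∈ toR '' ((SP : Set (Fin d → ℤ))), z a ≤ c := by
      rintro a ⟨t, ht, rfl⟩
      rw [Finset.mem_coe] at ht
      rcases eq_or_ne t uv with rfl | hne
      · exact le_rfl
      · exact (hz t ht hne).le
    have hPb : ∀ p ∈ P, z p ≤ c := by
      rw [hSPeq]
      exact fun p hp => le_on_convexHull hub p hp
    have huniqP : ∀ p ∈ P, z p = c → p = toR uv := by
      intro p hp hpc
      refine eq_of_expose (T := SP.image toR) (f := z) (c := c) (x₀ := toR uv) ?_ ?_ ?_ hpc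
      · intro a ha
        obtain ⟨t, ht, rfl⟩ := Finset.mem_image.mp ha
        exact hub _ ⟨t, Finset.mem_coe.mpr ht, rfl⟩
      · intro a ha hne
        obtain ⟨t, ht, rfl⟩ := Finset.mem_image.mp ha
        have htm : t ≠ uv := fun hc => hne (by rw [hc])
        exact hz t ht htm
      · rw [Finset.coe_image]
        rw [hSPeq] at hp
        exact hp
    set y : Lam d := z - maxF z • wlin w with hydef
    have hyz : psi y = z := hpsi_surj z
    have hQb : ∀ q ∈ Q, y q ≤ c := key1 y c (fun p hp => by rw [hyz]; exact hPb p hp)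
    have hQne : Q.Nonempty := ⟨0, interior_subset hQ0⟩
    obtain ⟨xq, hxqEQ, hxqmax⟩ := exists_extreme_max hQcomp hQconv hQne hEQfin y
    have hxqc : y xq = c := by
      refine le_antisymm (hQb xq (extremePoints_subset hxqEQ)) ?_
      have h1 := key2 y (y xq) (fun q hq => hxqmax q hq) (toR uv) (extremePoints_subset hxEP)
      rw [hyz] at h1
      exact h1
    obtain ⟨mq, hmqT, hmqeq⟩ := hEQsub hxqEQ
    rw [Finset.mem_coe] at hmqT
    subst hmqeq
    obtain ⟨m', hm'eq, hm'prim⟩ := hQv (toR mq) hxqEQ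
    have hm'val : m' = mq := toR_injective hm'eq
    rw [hm'val] at hm'prim
    rcases hTQprov mq hmqT with ⟨h, hneg, hmG⟩ | ⟨h, h0, u, huLPh, g, hgSF, hmdecomp⟩
    · obtain ⟨g0, hg0, hgmax⟩ := hmaxF_mem y
      have hsliceMem : toR mq + (-(h:ℝ)) • toR g0 ∈ heightSlice w h P :=
        (hG h hneg).2.2 (Set.add_mem_add hmG (Set.smul_mem_smul_set (hFmem g0 hg0)))
      have hpP : toR mq + (-(h:ℝ)) • toR g0 ∈ P := hslice_sub h hsliceMem
      have hph : wlin w (toR mq + (-(h:ℝ)) • toR g0) = (h:ℝ) := hslice_ht h _ hsliceMem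
      have hzc : z (toR mq + (-(h:ℝ)) • toR g0) = c := by
        rw [← hyz, hpsi_apply, hph, map_add, map_smul, smul_eq_mul, hgmax, hxqc]
        ring
      have hpt := huniqP _ hpP hzc
      have heq2 : toR (mq + (-h) • g0) = toR uv := by
        rw [toR_add, toR_zsmul, Int.cast_neg]
        exact hpt
      have huv_val : mq + (-h) • g0 = uv := toR_injective heq2
      have hdot_uv : intDot w uv = h := by
        have h1 : wlin w (toR uv) = (h:ℝ) := by rw [← hpt]; exact hph
        rw [wlin_apply, pairR_toR] at h1
        exact_mod_cast h1
      have hmq_decomp : mq = uv + h • g0 := by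
        have h2 : uv + h • g0 = mq := by
          rw [← huv_val]
          funext i
          simp only [Pi.add_apply, Pi.smul_apply, Pi.neg_apply, smul_eq_mul, neg_mul]
          ring
        exact h2.symm
      rw [hmq_decomp] at hm'prim
      exact isPrimitive_unshift hm'prim hdot_uv (hFdot0 g0 hg0)
    · have hudot : intDot w u = h := ((hLPh_mem h u).mp huLPh).2
      have huP : toR u ∈ P := ((hLPh_mem h u).mp huLPh).1
      have hwu : wlin w (toR u) = (h:ℝ) := by rw [wlin_apply, pairR_toR, hudot]
      have hyg_le : y (toR g) ≤ maxF y := hmaxF_leS y g hgSF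
      have hzu : z (toR u) = y (toR u) + maxF y * (h:ℝ) := by
        rw [← hyz, hpsi_apply, hwu]
      have hc_eq : c = y (toR u) + (h:ℝ) * y (toR g) := by
        rw [← hxqc, hmdecomp, toR_add, toR_zsmul, map_add, map_smul, smul_eq_mul]
      have hh0R : (0:ℝ) ≤ (h:ℝ) := by exact_mod_cast h0
      have hzu_le : z (toR u) ≤ c := hPb _ huP
      have hzu_ge : c ≤ z (toR u) := by
        rw [hc_eq, hzu]
        nlinarith
      have hzuc : z (toR u) = c := le_antisymm hzu_le hzu_ge
      have huuv := huniqP _ huP hzuc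
      have huval : u = uv := toR_injective huuv
      rw [hmdecomp, huval] at hm'prim
      exact isPrimitive_unshift hm'prim (by rw [← huval]; exact hudot) (hFdot0 g hgSF)
end
end

section
/- In dimension 2, the two mutations with respect to opposite factors are GL(2,ℤ)-equivalent: mut_w(P, F) ≅ mut_w(P, −F) where F = conv{0, u_E} and −F = conv{0, −u_E}. -/
open Set Pointwise

noncomputable section

/-- Two subsets of `ℝ²` are `GL(2,ℤ)`-equivalent: one is carried to the other by a
unimodular integral linear map, possibly composed with a lattice translation. -/
def GL2ZEquiv (P Q : Set (RVec 2)) : Prop :=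
  ∃ (A : Matrix (Fin 2) (Fin 2) ℤ) (t : Fin 2 → ℤ), IsUnit A.det ∧
    Q = (fun x : RVec 2 => (fun i => ∑ j, (A i j : ℝ) * x j) + toR t) '' P

section AuxLemmas
variable {d : ℕ}

lemma pairR_add (w : Fin d → ℤ) (x y : RVec d) :
    pairR w (x + y) = pairR w x + pairR w y := by
  simp [pairR, Pi.add_apply, mul_add, Finset.sum_add_distrib]

lemma pairR_smul (w : Fin d → ℤ) (c : ℝ) (x : RVec d) :
    pairR w (c • x) = c * pairR w x := by
  simp only [pairR, Pi.smul_apply, smul_eq_mul, Finset.mul_sum]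
  exact Finset.sum_congr rfl (fun i _ => by ring)

lemma pairR_neg (w : Fin d → ℤ) (x : RVec d) : pairR w (-x) = -pairR w x := by
  simp [pairR, mul_neg, Finset.sum_neg_distrib]

lemma pairR_toR (w u : Fin d → ℤ) :
    pairR w (toR u) = ((∑ i, w i * u i : ℤ) : ℝ) := by
  push_cast [pairR, toR]
  rfl

lemma toR_neg (u : Fin d → ℤ) : toR (-u) = -toR u := by
  funext i; simp [toR]

lemma toR_zero : toR (0 : Fin d → ℤ) = 0 := by
  funext i; simp [toR]

lemma mem_segment_zero {z x : RVec d} :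
    x ∈ segment ℝ 0 z ↔ ∃ t : ℝ, 0 ≤ t ∧ t ≤ 1 ∧ x = t • z := by
  constructor
  · rintro ⟨a, b, ha, hb, hab, rfl⟩
    exact ⟨b, hb, by linarith, by simp⟩
  · rintro ⟨t, h0, h1, rfl⟩
    exact ⟨1 - t, t, by linarith, h0, by ring, by simp⟩

lemma mem_smul_segment_zero {c : ℝ} {z x : RVec d} :
    x ∈ c • segment ℝ 0 z ↔ ∃ t : ℝ, 0 ≤ t ∧ t ≤ 1 ∧ x = (c * t) • z := by
  simp only [Set.mem_smul_set]
  constructor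
  · rintro ⟨y, hy, rfl⟩
    obtain ⟨t, h0, h1, rfl⟩ := mem_segment_zero.1 hy
    exact ⟨t, h0, h1, by rw [smul_smul]⟩
  · rintro ⟨t, h0, h1, rfl⟩
    exact ⟨t • z, mem_segment_zero.2 ⟨t, h0, h1, rfl⟩, by rw [smul_smul]⟩

lemma zero_mem_smul_segment_zero (c : ℝ) (z : RVec d) :
    (0 : RVec d) ∈ c • segment ℝ 0 z :=
  mem_smul_segment_zero.2 ⟨0, le_refl _, zero_le_one, by simp⟩

lemma smul_self_mem_smul_segment_zero (c : ℝ) (z : RVec d) :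
    c • z ∈ c • segment ℝ 0 z :=
  mem_smul_segment_zero.2 ⟨1, zero_le_one, le_refl _, by simp⟩

lemma convex_pair_eq (w : Fin d → ℤ) (c : ℝ) :
    Convex ℝ {x : RVec d | pairR w x = c} := by
  intro x hx y hy a b ha hb hab
  simp only [Set.mem_setOf_eq] at *
  rw [pairR_add, pairR_smul, pairR_smul, hx, hy]
  linear_combination c * hab

lemma heightSlice_subset {w : Fin d → ℤ} {h : ℤ} {P : Set (RVec d)}
    (hPc : Convex ℝ P) : heightSlice w h P ⊆ P := by
  apply convexHull_min _ hPc
  rintro x ⟨u, ⟨h1, _⟩, rfl⟩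
  exact h1

lemma pairR_of_mem_heightSlice {w : Fin d → ℤ} {h : ℤ} {P : Set (RVec d)}
    {x : RVec d} (hx : x ∈ heightSlice w h P) : pairR w x = (h : ℝ) := by
  have hsub : heightSlice w h P ⊆ {x | pairR w x = (h : ℝ)} := by
    apply convexHull_min _ (convex_pair_eq w _)
    rintro x ⟨u, ⟨_, h2⟩, rfl⟩
    exact h2
  exact hsub hx

lemma mem_heightSlice_of_lattice {w : Fin d → ℤ} {P : Set (RVec d)}
    {m : Fin d → ℤ} (hm : toR m ∈ P) {h : ℤ} (hh : pairR w (toR m) = (h : ℝ)) :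
    toR m ∈ heightSlice w h P :=
  subset_convexHull ℝ _ ⟨m, ⟨hm, hh⟩, rfl⟩

lemma convex_mutation (w : Fin d → ℤ) (F : Set (RVec d)) (G : ℤ → Set (RVec d))
    (P : Set (RVec d)) : Convex ℝ (mutation w F G P) :=
  convex_convexHull ℝ _

lemma G_subset_mutation (w : Fin d → ℤ) (F : Set (RVec d)) (G : ℤ → Set (RVec d))
    (P : Set (RVec d)) {h : ℤ} (hh : h < 0) : G h ⊆ mutation w F G P := by
  refine subset_trans ?_ (subset_convexHull ℝ _)
  intro x hx
  exact Set.mem_union_left _ (Set.mem_iUnion₂.2 ⟨h, hh, hx⟩)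

lemma slice_subset_mutation (w : Fin d → ℤ) (F : Set (RVec d)) (G : ℤ → Set (RVec d))
    (P : Set (RVec d)) (n : ℕ) :
    heightSlice w (n : ℤ) P + (n : ℝ) • F ⊆ mutation w F G P := by
  refine subset_trans ?_ (subset_convexHull ℝ _)
  intro x hx
  exact Set.mem_union_right _ (Set.mem_iUnion.2 ⟨n, hx⟩)

end AuxLemmas
section Ind
variable {d : ℕ}

/-- Krein–Milman for lattice polytopes. -/
lemma latticePolytope_eq_convexHull_extremePoints {P : Set (RVec d)}
    (hP : IsLatticePolytope P) :
    P = convexHull ℝ (Set.extremePoints ℝ P) := by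
  obtain ⟨S, hSne, hPS⟩ := hP
  have hfin : (toR '' (S : Set (Fin d → ℤ))).Finite := (S.finite_toSet).image _
  have hPc : Convex ℝ P := hPS ▸ convex_convexHull ℝ _
  have hcomp : IsCompact P := hPS ▸ hfin.isCompact_convexHull ℝ
  have hextfin : (Set.extremePoints ℝ P).Finite := by
    apply hfin.subset
    rw [hPS]
    exact extremePoints_convexHull_subset
  have hclosed : IsClosed (convexHull ℝ (Set.extremePoints ℝ P)) :=
    hextfin.isClosed_convexHull ℝ
  have := closure_convexHull_extremePoints hcomp hPc
  rw [hclosed.closure_eq] at this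
  exact this.symm

/-- Independence of the mutation from the witness family, as an inclusion. -/
lemma mutation_witness_subset {P : Set (RVec d)} (hP : IsLatticePolytope P)
    (w : Fin d → ℤ) (z : RVec d) (hz : pairR w z = 0) (G1 G2 : ℤ → Set (RVec d))
    (h1 : IsMutationWitness w (segment ℝ 0 z) G1 P)
    (h2 : IsMutationWitness w (segment ℝ 0 z) G2 P) :
    mutation w (segment ℝ 0 z) G1 P ⊆ mutation w (segment ℝ 0 z) G2 P := by
  obtain ⟨S, hSne, hPS⟩ := hP
  have hPc : Convex ℝ P := hPS ▸ convex_convexHull ℝ _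
  set F : Set (RVec d) := segment ℝ 0 z with hF
  set M2 : Set (RVec d) := mutation w F G2 P with hM2
  have hM2conv : Convex ℝ M2 := convex_mutation w F G2 P
  -- every extreme point of `P` admits good moves into `M2`
  have hext : ∀ v ∈ Set.extremePoints ℝ P,
      ∃ t s : ℝ, t ≤ 0 ∧ pairR w v ≤ s ∧ v + t • z ∈ M2 ∧ v + s • z ∈ M2 := by
    intro v hv
    have hvP : v ∈ P := extremePoints_subset hv
    have hvS : v ∈ toR '' (S : Set (Fin d → ℤ)) := by
      have := hPS ▸ hv
      exact extremePoints_convexHull_subset this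
    obtain ⟨m, hmS, rfl⟩ := hvS
    set n : ℤ := ∑ i, w i * m i with hn
    have hpair : pairR w (toR m) = (n : ℝ) := pairR_toR w m
    rcases le_or_gt 0 n with hn0 | hn0
    · -- nonnegative height: use the slice part of the mutation
      have hsl : toR m ∈ heightSlice w n P := mem_heightSlice_of_lattice hvP hpair
      have hcast : ((n.toNat : ℕ) : ℤ) = n := Int.toNat_of_nonneg hn0
      have hcastR : ((n.toNat : ℕ) : ℝ) = (n : ℝ) := by
        rw [← Int.cast_natCast, hcast]
      have hmem : ∀ y ∈ (n : ℝ) • F, toR m + y ∈ M2 := by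
        intro y hy
        apply slice_subset_mutation w F G2 P n.toNat
        refine ⟨toR m, ?_, y, ?_, rfl⟩
        · rw [hcast]; exact hsl
        · rw [hcastR]; exact hy
      refine ⟨0, (n : ℝ), le_refl _, le_of_eq hpair, ?_, ?_⟩
      · have := hmem 0 (zero_mem_smul_segment_zero _ _)
        simpa using this
      · exact hmem ((n : ℝ) • z) (smul_self_mem_smul_segment_zero _ _)
    · -- negative height: use the witness `G2 n`
      have hsand := (h2 n hn0).2.1
      have hvmem : toR m ∈ G2 n + (-n : ℝ) • F := hsand ⟨hv, hpair⟩
      obtain ⟨g, hg, f, hf, hgf⟩ := hvmem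
      obtain ⟨t', ht0, ht1, rfl⟩ := mem_smul_segment_zero.1 hf
      set τ : ℝ := -(n : ℝ) * t' with hτ
      have hτ0 : 0 ≤ τ := by
        have : (0:ℝ) ≤ -(n:ℝ) := by
          have : (n:ℝ) < 0 := by exact_mod_cast hn0
          linarith
        exact mul_nonneg this ht0
      have hgM : g ∈ M2 := G_subset_mutation w F G2 P hn0 hg
      have hback : toR m + (-τ) • z = g := by
        rw [← hgf]; rw [hτ]; module
      refine ⟨-τ, -τ, by linarith, ?_, ?_, ?_⟩
      · rw [hpair, hτ]
        have hnneg : (n:ℝ) < 0 := by exact_mod_cast hn0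
        nlinarith
      · rw [hback]; exact hgM
      · rw [hback]; exact hgM
  -- the set of points with good moves is convex and contains `P`
  set D : Set (RVec d) :=
    {x | ∃ t s : ℝ, t ≤ 0 ∧ pairR w x ≤ s ∧ x + t • z ∈ M2 ∧ x + s • z ∈ M2} with hD
  have hDconv : Convex ℝ D := by
    rintro x ⟨t1, s1, ht1, hs1, hxt1, hxs1⟩ y ⟨t2, s2, ht2, hs2, hyt2, hys2⟩ a b ha hb hab
    refine ⟨a * t1 + b * t2, a * s1 + b * s2, ?_, ?_, ?_, ?_⟩
    · nlinarith
    · rw [pairR_add, pairR_smul, pairR_smul]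
      nlinarith
    · have := hM2conv hxt1 hyt2 ha hb hab
      have heq : a • (x + t1 • z) + b • (y + t2 • z)
          = a • x + b • y + (a * t1 + b * t2) • z := by module
      rwa [heq] at this
    · have := hM2conv hxs1 hys2 ha hb hab
      have heq : a • (x + s1 • z) + b • (y + s2 • z)
          = a • x + b • y + (a * s1 + b * s2) • z := by module
      rwa [heq] at this
  have hPD : P ⊆ D := by
    have hKM := latticePolytope_eq_convexHull_extremePoints ⟨S, hSne, hPS⟩
    rw [hKM]
    apply convexHull_min _ hDconv
    intro v hv
    obtain ⟨t, s, h₁, h₂, h₃, h₄⟩ := hext v hv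
    exact ⟨t, s, h₁, h₂, h₃, h₄⟩
  -- main inclusion
  apply convexHull_min _ hM2conv
  apply Set.union_subset
  · -- the negative-height parts of `G1`
    refine Set.iUnion₂_subset ?_
    intro h hh x hx
    set ℓ : ℝ := -(h : ℝ) with hℓ
    have hℓ0 : 0 ≤ ℓ := by
      have : (h:ℝ) < 0 := by exact_mod_cast hh
      simp only [hℓ]; linarith
    have hup := (h1 h hh).2.2
    have hx1 : x ∈ heightSlice w h P := by
      apply hup
      exact ⟨x, hx, 0, zero_mem_smul_segment_zero _ _, add_zero x⟩
    have hx2 : x + ℓ • z ∈ heightSlice w h P := by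
      apply hup
      exact ⟨x, hx, ℓ • z, smul_self_mem_smul_segment_zero _ _, rfl⟩
    have hxh : pairR w x = (h : ℝ) := pairR_of_mem_heightSlice hx1
    obtain ⟨t, s, ht, _, hxt, _⟩ := hPD (heightSlice_subset hPc hx1)
    obtain ⟨t', s', _, hs', _, hxs'⟩ := hPD (heightSlice_subset hPc hx2)
    have hpair2 : pairR w (x + ℓ • z) = (h : ℝ) := by
      rw [pairR_add, pairR_smul, hz, hxh]; ring
    have hs'0 : 0 ≤ ℓ + s' := by
      rw [hpair2] at hs'
      simp only [hℓ] at *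
      linarith
    have hr : x + (ℓ + s') • z ∈ M2 := by
      have heq : x + ℓ • z + s' • z = x + (ℓ + s') • z := by module
      rwa [heq] at hxs'
    rcases eq_or_lt_of_le ht with hteq | htlt
    · have hx0 : x + t • z = x := by rw [hteq]; simp
      rwa [hx0] at hxt
    · have hDpos : (0:ℝ) < ℓ + s' - t := by linarith
      have hDne : ℓ + s' - t ≠ 0 := ne_of_gt hDpos
      have ha : 0 ≤ (ℓ + s') / (ℓ + s' - t) := div_nonneg hs'0 hDpos.le
      have hb : 0 ≤ (-t) / (ℓ + s' - t) := div_nonneg (by linarith) hDpos.le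
      have hab : (ℓ + s') / (ℓ + s' - t) + (-t) / (ℓ + s' - t) = 1 := by
        rw [← add_div, show ℓ + s' + -t = ℓ + s' - t by ring]
        exact div_self hDne
      have hcomb := hM2conv hxt hr ha hb hab
      have heq : ((ℓ + s') / (ℓ + s' - t)) • (x + t • z)
          + ((-t) / (ℓ + s' - t)) • (x + (ℓ + s') • z) = x := by
        match_scalars <;> (field_simp; try ring)
      rwa [heq] at hcomb
  · -- the nonnegative-height parts
    exact Set.iUnion_subset (fun n => slice_subset_mutation w F G2 P n)

end Ind
section Shear
variable {d : ℕ}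

/-- The integral shear `x ↦ x − ⟨w,x⟩·u_E`. -/
def shearF (w uE : Fin d → ℤ) : RVec d → RVec d := fun x => x - pairR w x • toR uE

lemma shearF_linear (w uE : Fin d → ℤ) : IsLinearMap ℝ (shearF w uE) where
  map_add x y := by
    simp only [shearF, pairR_add, add_smul]; module
  map_smul c x := by
    simp only [shearF, pairR_smul, smul_eq_mul]; module

lemma shear_slice_add (w uE : Fin d → ℤ) (hperp : pairR w (toR uE) = 0)
    (P : Set (RVec d)) (n : ℕ) :
    shearF w uE '' (heightSlice w (n : ℤ) P + (n : ℝ) • segment ℝ 0 (toR uE))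
      = heightSlice w (n : ℤ) P + (n : ℝ) • segment ℝ 0 (-toR uE) := by
  ext y
  constructor
  · rintro ⟨x, hx, rfl⟩
    obtain ⟨p, hp, f, hf, rfl⟩ := hx
    obtain ⟨t, ht0, ht1, rfl⟩ := mem_smul_segment_zero.1 hf
    have hpp : pairR w p = ((n : ℤ) : ℝ) := pairR_of_mem_heightSlice hp
    refine ⟨p, hp, ((n : ℝ) * (1 - t)) • (-toR uE),
      mem_smul_segment_zero.2 ⟨1 - t, by linarith, by linarith, rfl⟩, ?_⟩
    show p + ((n:ℝ) * (1 - t)) • (-toR uE) = shearF w uE (p + ((n:ℝ) * t) • toR uE)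
    simp only [shearF, pairR_add, pairR_smul, hpp, hperp, mul_zero, add_zero,
      Int.cast_natCast]
    module
  · rintro ⟨p, hp, f, hf, rfl⟩
    obtain ⟨s, hs0, hs1, rfl⟩ := mem_smul_segment_zero.1 hf
    have hpp : pairR w p = ((n : ℤ) : ℝ) := pairR_of_mem_heightSlice hp
    refine ⟨p + ((n:ℝ) * (1 - s)) • toR uE,
      ⟨p, hp, ((n:ℝ) * (1 - s)) • toR uE,
        mem_smul_segment_zero.2 ⟨1 - s, by linarith, by linarith, rfl⟩, rfl⟩, ?_⟩
    simp only [shearF, pairR_add, pairR_smul, hpp, hperp, mul_zero, add_zero,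
      Int.cast_natCast]
    module

lemma mutation_shear (w uE : Fin d → ℤ) (hperp : pairR w (toR uE) = 0)
    (P : Set (RVec d)) (G : ℤ → Set (RVec d)) :
    mutation w (segment ℝ 0 (-toR uE)) (fun h => shearF w uE '' G h) P
      = shearF w uE '' mutation w (segment ℝ 0 (toR uE)) G P := by
  unfold mutation
  rw [(shearF_linear w uE).image_convexHull]
  congr 1
  rw [Set.image_union]
  congr 1
  · simp [Set.image_iUnion]
  · rw [Set.image_iUnion]
    exact Set.iUnion_congr fun n => (shear_slice_add w uE hperp P n).symm

lemma shear_witness (w uE : Fin d → ℤ) (hperp : pairR w (toR uE) = 0)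
    (P : Set (RVec d)) (G : ℤ → Set (RVec d))
    (hG : IsMutationWitness w (segment ℝ 0 (toR uE)) G P) :
    IsMutationWitness w (segment ℝ 0 (-toR uE)) (fun h => shearF w uE '' G h) P := by
  intro h hh
  obtain ⟨hpoly, hlow, hup⟩ := hG h hh
  have hGheight : ∀ g ∈ G h, pairR w g = (h : ℝ) := by
    intro g hg
    exact pairR_of_mem_heightSlice
      (hup ⟨g, hg, 0, zero_mem_smul_segment_zero _ _, add_zero g⟩)
  refine ⟨?_, ?_, ?_⟩
  · rcases hpoly with he | ⟨T, hTne, hTG⟩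
    · left; simp [he]
    · right
      refine ⟨T.image (fun m => m - (∑ i, w i * m i) • uE), hTne.image _, ?_⟩
      show shearF w uE '' G h = _
      rw [hTG, (shearF_linear w uE).image_convexHull]
      congr 1
      rw [Finset.coe_image, ← Set.image_comp, ← Set.image_comp]
      apply Set.image_congr
      intro m _
      show shearF w uE (toR m) = toR (m - (∑ i, w i * m i) • uE)
      funext i
      simp only [shearF, pairR_toR, toR, Pi.sub_apply, Pi.smul_apply, smul_eq_mul]
      push_cast
      ring
  · rintro x ⟨hxe, hxh⟩
    have hx : x ∈ G h + (-h : ℝ) • segment ℝ 0 (toR uE) := hlow ⟨hxe, hxh⟩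
    obtain ⟨g, hg, f, hf, hgf⟩ := hx
    obtain ⟨t, ht0, ht1, rfl⟩ := mem_smul_segment_zero.1 hf
    have hgh : pairR w g = (h : ℝ) := hGheight g hg
    refine ⟨shearF w uE g, Set.mem_image_of_mem _ hg,
      ((-(h:ℝ)) * (1 - t)) • (-toR uE),
      mem_smul_segment_zero.2 ⟨1 - t, by linarith, by linarith, rfl⟩, ?_⟩
    rw [← hgf]
    simp only [shearF, hgh]
    module
  · rintro y ⟨gy, ⟨g, hg, rfl⟩, f, hf, rfl⟩
    obtain ⟨s, hs0, hs1, rfl⟩ := mem_smul_segment_zero.1 hf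
    have hgh : pairR w g = (h : ℝ) := hGheight g hg
    apply hup
    refine ⟨g, hg, ((-(h:ℝ)) * (1 - s)) • toR uE,
      mem_smul_segment_zero.2 ⟨1 - s, by linarith, by linarith, rfl⟩, ?_⟩
    simp only [shearF, hgh]
    module

end Shear
/-- In dimension `2`, the two mutations with respect to opposite factors are
`GL(2,ℤ)`-equivalent: `mut_w(P, F) ≅ mut_w(P, −F)`, where `P` is a lattice polygon
admitting a mutation with respect to the primitive inner normal vector `w` of an
edge `E` of `P`, `u_E` is a primitive lattice vector with `⟨w, u_E⟩ = 0`, and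
`F = conv{0, u_E}`, `−F = conv{0, −u_E}`. -/
theorem mutation_neg_factor_equiv (P : Set (RVec 2)) (hP : IsLatticePolytope P)
    (w : Fin 2 → ℤ) (hw : IsPrimitive w)
    -- `w` is the inner normal vector of an edge `E` of `P` (the face of `P` where
    -- `⟨w,·⟩` attains its minimum contains at least two points):
    (hE : ∃ x y, x ∈ P ∧ y ∈ P ∧ x ≠ y ∧
      pairR w x = sInf (pairR w '' P) ∧ pairR w y = sInf (pairR w '' P))
    (uE : Fin 2 → ℤ) (huE : IsPrimitive uE) (hperp : pairR w (toR uE) = 0)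
    (G G' : ℤ → Set (RVec 2))
    (hG : IsMutationWitness w (segment ℝ 0 (toR uE)) G P)
    (hG' : IsMutationWitness w (segment ℝ 0 (toR (-uE))) G' P) :
    GL2ZEquiv (mutation w (segment ℝ 0 (toR uE)) G P)
      (mutation w (segment ℝ 0 (toR (-uE))) G' P) := by

  have hneg : toR (-uE) = -toR uE := toR_neg uE
  rw [hneg] at hG' ⊢
  set ψ := shearF w uE with hψ
  have hψG : IsMutationWitness w (segment ℝ 0 (-toR uE)) (fun h => ψ '' G h) P :=
    shear_witness w uE hperp P G hG
  have hz' : pairR w (-toR uE) = 0 := by rw [pairR_neg, hperp]; ring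
  have key1 : mutation w (segment ℝ 0 (-toR uE)) G' P
      = mutation w (segment ℝ 0 (-toR uE)) (fun h => ψ '' G h) P :=
    Set.Subset.antisymm
      (mutation_witness_subset hP w _ hz' G' _ hG' hψG)
      (mutation_witness_subset hP w _ hz' _ G' hψG hG')
  have key2 := mutation_shear w uE hperp P G
  refine ⟨Matrix.of (fun i j => (if i = j then 1 else 0) - uE i * w j), 0, ?_, ?_⟩
  · -- determinant is 1
    have hsum : w 0 * uE 0 + w 1 * uE 1 = 0 := by
      have hcast := pairR_toR w uE
      rw [hperp] at hcast
      have h0 : (∑ i, w i * uE i) = 0 := by exact_mod_cast hcast.symm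
      rw [Fin.sum_univ_two] at h0
      exact h0
    have hdet : (Matrix.of (fun i j : Fin 2 =>
        (if i = j then 1 else 0) - uE i * w j)).det = 1 := by
      rw [Matrix.det_fin_two]
      simp only [Matrix.of_apply]
      norm_num
      linear_combination -hsum
    rw [hdet]
    exact isUnit_one
  · have hmap : (fun x : RVec 2 => (fun i => ∑ j, ((Matrix.of (fun i j : Fin 2 =>
        (if i = j then 1 else 0) - uE i * w j)) i j : ℝ) * x j) + toR 0) = ψ := by
      funext x
      rw [toR_zero, add_zero]
      funext i
      simp only [Matrix.of_apply, Fin.sum_univ_two, hψ, shearF, pairR, Pi.sub_apply,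
        Pi.smul_apply, smul_eq_mul, toR]
      fin_cases i <;> simp <;> push_cast <;> ring
    rw [hmap, key1, key2]
end
end
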